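/- arXiv:1710.01623 — 11 statements merged into one kernel-verified Lean document; each statement's English description precedes it below -/
import Mathlib

section
/- Let n ≥ 1 and let A, H be real n×n matrices such that H is symmetric and positive definite, and such that the product HA is positive definite in the sense that zᵀ(HA)z > 0 for every nonzero z ∈ ℝⁿ (HA is not assumed symmetric). Then every complex eigenvalue λ of A, i.e. every λ ∈ ℂ for which the complexification of A admits a nonzero eigenvector u ∈ ℂⁿ with Au = λu, has strictly positive real part. -/
open Matrix

/-- Any real matrix `A` such that `H * A` is positive definite for some symmetric
positive definite `H` has all its complex eigenvalues with strictly positive real part. -/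
theorem eigenvalues_posRe_of_entropy_structure
    (n : ℕ) (hn : 1 ≤ n) (A H : Matrix (Fin n) (Fin n) ℝ)
    (hHsymm : H.IsSymm)
    (hHpd : ∀ z : Fin n → ℝ, z ≠ 0 → 0 < z ⬝ᵥ (H *ᵥ z))
    (hHApd : ∀ z : Fin n → ℝ, z ≠ 0 → 0 < z ⬝ᵥ ((H * A) *ᵥ z))
    (lam : ℂ) (u : Fin n → ℂ) (hu : u ≠ 0)
    (heig : (A.map (fun x : ℝ => (x : ℂ))) *ᵥ u = lam • u) :
    0 < lam.re := by
  classical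
  set x : Fin n → ℝ := fun i => (u i).re with hx
  set y : Fin n → ℝ := fun i => (u i).im with hy
  -- real and imaginary part of quadratic forms
  have key_re : ∀ M : Matrix (Fin n) (Fin n) ℝ,
      (star u ⬝ᵥ ((M.map (fun t : ℝ => (t : ℂ))) *ᵥ u)).re
        = x ⬝ᵥ (M *ᵥ x) + y ⬝ᵥ (M *ᵥ y) := by
    intro M
    simp only [dotProduct, mulVec, Matrix.map_apply, Pi.star_apply, Finset.mul_sum,
      Complex.re_sum]
    rw [← Finset.sum_add_distrib]
    refine Finset.sum_congr rfl fun i _ => ?_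
    rw [← Finset.sum_add_distrib]
    refine Finset.sum_congr rfl fun j _ => ?_
    simp [Complex.mul_re, Complex.mul_im, hx, hy]
  have key_im : ∀ M : Matrix (Fin n) (Fin n) ℝ,
      (star u ⬝ᵥ ((M.map (fun t : ℝ => (t : ℂ))) *ᵥ u)).im
        = x ⬝ᵥ (M *ᵥ y) - y ⬝ᵥ (M *ᵥ x) := by
    intro M
    simp only [dotProduct, mulVec, Matrix.map_apply, Pi.star_apply, Finset.mul_sum,
      Complex.im_sum]
    rw [← Finset.sum_sub_distrib]
    refine Finset.sum_congr rfl fun i _ => ?_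
    rw [← Finset.sum_sub_distrib]
    refine Finset.sum_congr rfl fun j _ => ?_
    simp [Complex.mul_re, Complex.mul_im, hx, hy]
    ring
  -- x and y are not both zero
  have hxy : x ≠ 0 ∨ y ≠ 0 := by
    by_contra h
    push_neg at h
    apply hu
    funext i
    have hx0 : x i = 0 := by rw [h.1]; rfl
    have hy0 : y i = 0 := by rw [h.2]; rfl
    exact Complex.ext hx0 hy0
  -- nonnegativity of quadratic forms
  have hHnn : ∀ z : Fin n → ℝ, 0 ≤ z ⬝ᵥ (H *ᵥ z) := by
    intro z
    by_cases hz : z = 0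
    · simp [hz]
    · exact le_of_lt (hHpd z hz)
  have hHAnn : ∀ z : Fin n → ℝ, 0 ≤ z ⬝ᵥ ((H * A) *ᵥ z) := by
    intro z
    by_cases hz : z = 0
    · simp [hz]
    · exact le_of_lt (hHApd z hz)
  set p : ℂ := star u ⬝ᵥ ((H.map (fun t : ℝ => (t : ℂ))) *ᵥ u) with hp
  set q : ℂ := star u ⬝ᵥ (((H * A).map (fun t : ℝ => (t : ℂ))) *ᵥ u) with hq
  have hpre : 0 < p.re := by
    rw [hp, key_re]
    rcases hxy with h | h
    · exact add_pos_of_pos_of_nonneg (hHpd x h) (hHnn y)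
    · exact add_pos_of_nonneg_of_pos (hHnn x) (hHpd y h)
  have hqre : 0 < q.re := by
    rw [hq, key_re]
    rcases hxy with h | h
    · exact add_pos_of_pos_of_nonneg (hHApd x h) (hHAnn y)
    · exact add_pos_of_nonneg_of_pos (hHAnn x) (hHApd y h)
  have hpim : p.im = 0 := by
    rw [hp, key_im]
    have hsym : ∀ a b : Fin n → ℝ, a ⬝ᵥ (H *ᵥ b) = b ⬝ᵥ (H *ᵥ a) := by
      intro a b
      rw [dotProduct_mulVec, ← Matrix.mulVec_transpose, hHsymm.eq, dotProduct_comm]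
    rw [hsym x y]
    ring
  -- q = lam * p
  have hqp : q = lam * p := by
    rw [hq, hp]
    have hmap : (H * A).map (fun t : ℝ => (t : ℂ))
        = (H.map (fun t : ℝ => (t : ℂ))) * (A.map (fun t : ℝ => (t : ℂ))) := by
      ext i j
      simp [Matrix.mul_apply, Matrix.map_apply]
    rw [hmap, ← Matrix.mulVec_mulVec, heig, Matrix.mulVec_smul, dotProduct_smul]
    rfl
  have : q.re = lam.re * p.re := by
    rw [hqp, Complex.mul_re, hpim]
    ring
  nlinarith
end

section
/- Let d₀, d₁, d₂ > 0 and let u = (u₁, u₂) satisfy u₁ > 0, u₂ > 0, u₁ + u₂ < 1, and set u₃ = 1 − u₁ − u₂. Then for every z = (z₁, z₂) ∈ ℝ², the Maxwell–Stefan diffusion matrix A(u) and the entropy Hessian H(u) satisfy the identity zᵀ H(u) A(u) z = (1/a(u)) · ( d₂ z₁²/u₁ + d₁ z₂²/u₂ + d₀ (z₁ + z₂)²/u₃ ). -/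
open Matrix

/-- Maxwell–Stefan diffusion matrix for three components (in terms of the two
independent volume fractions `u1, u2`), including the factor `1 / a(u)`. -/
noncomputable def msA (d0 d1 d2 u1 u2 : ℝ) : Matrix (Fin 2) (Fin 2) ℝ :=
  (1 / (d1 * d2 * (1 - u1 - u2) + d0 * (d1 * u1 + d2 * u2))) •
    !![d2 + (d0 - d2) * u1, (d0 - d1) * u1;
       (d0 - d2) * u2, d1 + (d0 - d1) * u2]

/-- Hessian of the Maxwell–Stefan entropy density
`h(u) = u1(log u1 - 1) + u2(log u2 - 1) + u3(log u3 - 1)`, `u3 = 1 - u1 - u2`. -/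
noncomputable def msH (u1 u2 : ℝ) : Matrix (Fin 2) (Fin 2) ℝ :=
  !![1 / u1 + 1 / (1 - u1 - u2), 1 / (1 - u1 - u2);
     1 / (1 - u1 - u2), 1 / u2 + 1 / (1 - u1 - u2)]

/-- Entropy-production identity for the Maxwell–Stefan system:
`zᵀ H(u) A(u) z = (1/a(u)) (d2 z1²/u1 + d1 z2²/u2 + d0 (z1+z2)²/u3)`. -/
theorem maxwellStefan_entropy_identity
    (d0 d1 d2 u1 u2 : ℝ) (hd0 : 0 < d0) (hd1 : 0 < d1) (hd2 : 0 < d2)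
    (hu1 : 0 < u1) (hu2 : 0 < u2) (hsum : u1 + u2 < 1) (z : Fin 2 → ℝ) :
    z ⬝ᵥ ((msH u1 u2 * msA d0 d1 d2 u1 u2) *ᵥ z)
      = (1 / (d1 * d2 * (1 - u1 - u2) + d0 * (d1 * u1 + d2 * u2))) *
        (d2 * (z 0) ^ 2 / u1 + d1 * (z 1) ^ 2 / u2
          + d0 * (z 0 + z 1) ^ 2 / (1 - u1 - u2)) := by
  have hu3 : (0:ℝ) < 1 - u1 - u2 := by linarith
  have ha : (0:ℝ) < d1 * d2 * (1 - u1 - u2) + d0 * (d1 * u1 + d2 * u2) := by positivity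
  have h1 : u1 ≠ 0 := hu1.ne'
  have h2 : u2 ≠ 0 := hu2.ne'
  have h3 : (1 - u1 - u2) ≠ 0 := hu3.ne'
  have ha' : d1 * d2 * (1 - u1 - u2) + d0 * (d1 * u1 + d2 * u2) ≠ 0 := ha.ne'
  simp [msA, msH, dotProduct, mulVec, Matrix.mul_apply, Fin.sum_univ_two,
    Matrix.smul_apply]
  field_simp
  ring
end

section
/- Let d₀, d₁, d₂ > 0 and let u = (u₁, u₂) satisfy u₁ > 0, u₂ > 0, u₁ + u₂ < 1. Then the matrix product H(u) A(u) of the Maxwell–Stefan entropy Hessian and diffusion matrix is positive definite: zᵀ H(u) A(u) z > 0 for every nonzero z ∈ ℝ². -/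
open Matrix

/-- The product `H(u) A(u)` of the Maxwell–Stefan entropy Hessian and diffusion
matrix is positive definite. -/
theorem maxwellStefan_HA_posDef
    (d0 d1 d2 u1 u2 : ℝ) (hd0 : 0 < d0) (hd1 : 0 < d1) (hd2 : 0 < d2)
    (hu1 : 0 < u1) (hu2 : 0 < u2) (hsum : u1 + u2 < 1) :
    ∀ z : Fin 2 → ℝ, z ≠ 0 →
      0 < z ⬝ᵥ ((msH u1 u2 * msA d0 d1 d2 u1 u2) *ᵥ z) := by
  intro z hz
  have hu3 : 0 < 1 - u1 - u2 := by linarith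
  have ha : 0 < d1 * d2 * (1 - u1 - u2) + d0 * (d1 * u1 + d2 * u2) := by positivity
  have key : z ⬝ᵥ ((msH u1 u2 * msA d0 d1 d2 u1 u2) *ᵥ z) =
      (1 / (d1 * d2 * (1 - u1 - u2) + d0 * (d1 * u1 + d2 * u2))) *
        (d2 * (z 0) ^ 2 / u1 + d1 * (z 1) ^ 2 / u2 +
          d0 * (z 0 + z 1) ^ 2 / (1 - u1 - u2)) := by
    simp only [msH, msA, smul_eq_mul, Matrix.mul_apply, Matrix.mulVec, dotProduct,
      Fin.sum_univ_two, Matrix.smul_apply, Matrix.of_apply, Matrix.cons_val', Matrix.cons_val_zero,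
      Matrix.cons_val_one, Matrix.head_cons, Matrix.head_fin_const, Matrix.empty_val',
      Matrix.cons_val_fin_one]
    field_simp
    ring
  rw [key]
  have hz' : z 0 ≠ 0 ∨ z 1 ≠ 0 := by
    by_contra h
    push_neg at h
    apply hz
    funext i
    fin_cases i <;> simp [h.1, h.2]
  have h1 : 0 ≤ d2 * (z 0) ^ 2 / u1 := by positivity
  have h2 : 0 ≤ d1 * (z 1) ^ 2 / u2 := by positivity
  have h3 : 0 ≤ d0 * (z 0 + z 1) ^ 2 / (1 - u1 - u2) := by positivity
  have hpos : 0 < d2 * (z 0) ^ 2 / u1 + d1 * (z 1) ^ 2 / u2 +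
      d0 * (z 0 + z 1) ^ 2 / (1 - u1 - u2) := by
    rcases hz' with h | h
    · have : 0 < d2 * (z 0) ^ 2 / u1 := by positivity
      linarith
    · have : 0 < d1 * (z 1) ^ 2 / u2 := by positivity
      linarith
  positivity
end

section
/- Let d₀, d₁, d₂ > 0 and let u = (u₁, u₂) satisfy u₁ > 0, u₂ > 0, u₁ + u₂ < 1. Then every complex eigenvalue of the Maxwell–Stefan diffusion matrix A(u) has strictly positive real part; that is, the Maxwell–Stefan diffusion operator is normally elliptic. -/
open Matrix

lemma quad_re_pos (t d : ℝ) (ht : 0 < t) (hd : 0 < d) (mu : ℂ)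
    (h : mu ^ 2 - (t : ℂ) * mu + (d : ℂ) = 0) : 0 < mu.re := by
  set x := mu.re with hx
  set y := mu.im with hy
  have him : (mu ^ 2 - (t : ℂ) * mu + (d : ℂ)).im = 0 := by rw [h]; simp
  have hre : (mu ^ 2 - (t : ℂ) * mu + (d : ℂ)).re = 0 := by rw [h]; simp
  simp [pow_two, Complex.mul_re, Complex.mul_im, ← hx, ← hy] at him hre
  by_contra hxc
  push_neg at hxc
  have h2 : (2 * x - t) * y = 0 := by linear_combination him
  have hy0 : y = 0 := by
    rcases mul_eq_zero.mp h2 with h3 | h3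
    · linarith
    · exact h3
  rw [hy0] at hre
  nlinarith [sq_nonneg x]


/-- Every complex eigenvalue of the Maxwell–Stefan diffusion matrix `A(u)` has
strictly positive real part, i.e. the Maxwell–Stefan operator is normally elliptic. -/
theorem maxwellStefan_normally_elliptic
    (d0 d1 d2 u1 u2 : ℝ) (hd0 : 0 < d0) (hd1 : 0 < d1) (hd2 : 0 < d2)
    (hu1 : 0 < u1) (hu2 : 0 < u2) (hsum : u1 + u2 < 1)
    (lam : ℂ) (v : Fin 2 → ℂ) (hv : v ≠ 0)
    (heig : ((msA d0 d1 d2 u1 u2).map (fun x : ℝ => (x : ℂ))) *ᵥ v = lam • v) :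
    0 < lam.re := by
  set a : ℝ := d1 * d2 * (1 - u1 - u2) + d0 * (d1 * u1 + d2 * u2) with ha_def
  have ha : 0 < a := by
    rw [ha_def]
    have h1 : 0 < d1 * d2 * (1 - u1 - u2) := by
      apply mul_pos (mul_pos hd1 hd2); linarith
    have h2 : 0 < d0 * (d1 * u1 + d2 * u2) := by
      apply mul_pos hd0; nlinarith
    linarith
  have h0 := congr_fun heig 0
  have h1 := congr_fun heig 1
  simp [msA, mulVec, dotProduct, Fin.sum_univ_two, Matrix.map_apply, ← ha_def] at h0 h1
  have haC : (a : ℂ) ≠ 0 := by exact_mod_cast ha.ne'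
  field_simp [haC] at h0 h1
  rw [ha_def] at h0 h1
  set mu : ℂ := (a : ℂ) * lam with hmu
  set T : ℝ := (d2 + (d0 - d2) * u1) + (d1 + (d0 - d1) * u2) with hT
  have e0 : (mu ^ 2 - (T : ℂ) * mu + (a : ℂ)) * v 0 = 0 := by
    rw [hmu, hT, ha_def]
    push_cast at h0 h1 ⊢
    linear_combination (((d1 : ℂ) + ((d0 : ℂ) - d1) * u2)
        - ((d1 : ℂ) * d2 * (1 - u1 - u2) + d0 * ((d1 : ℂ) * u1 + d2 * u2)) * lam) * h0
        - ((d0 : ℂ) - d1) * (u1 : ℂ) * h1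
  have e1 : (mu ^ 2 - (T : ℂ) * mu + (a : ℂ)) * v 1 = 0 := by
    rw [hmu, hT, ha_def]
    push_cast at h0 h1 ⊢
    linear_combination (((d2 : ℂ) + ((d0 : ℂ) - d2) * u1)
        - ((d1 : ℂ) * d2 * (1 - u1 - u2) + d0 * ((d1 : ℂ) * u1 + d2 * u2)) * lam) * h1
        - ((d0 : ℂ) - d2) * (u2 : ℂ) * h0
  have key : mu ^ 2 - (T : ℂ) * mu + (a : ℂ) = 0 := by
    obtain ⟨i, hi⟩ := Function.ne_iff.mp hv
    fin_cases i
    · exact (mul_eq_zero.mp e0).resolve_right hi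
    · exact (mul_eq_zero.mp e1).resolve_right hi
  have hT0 : 0 < T := by
    rw [hT]
    nlinarith [mul_pos hd2 hu1, mul_pos hd1 hu2, mul_pos hd0 hu1, mul_pos hd0 hu2]
  have hmure : 0 < mu.re := quad_re_pos T a hT0 ha mu key
  have : mu.re = a * lam.re := by
    rw [hmu]; simp [Complex.mul_re]
  rw [this] at hmure
  by_contra hc
  push_neg at hc
  nlinarith
end

section
/- Let d₀, d₁, d₂ > 0. Then there exists κ > 0 (for instance κ = min(d₁, d₂)/max(d₁d₂, d₀d₁, d₀d₂)) such that for all u = (u₁, u₂) with u₁ > 0, u₂ > 0, u₁ + u₂ < 1 and all z = (z₁, z₂) ∈ ℝ²: zᵀ H(u) A(u) z ≥ κ ( z₁²/u₁ + z₂²/u₂ ). In particular, the Maxwell–Stefan system satisfies hypothesis (H2) of the boundedness-by-entropy method with exponent m = 1/2. -/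
open Matrix

set_option maxHeartbeats 1000000 in
/-- Hypothesis (H2) of the boundedness-by-entropy method for the Maxwell–Stefan
system with exponent `m = 1/2`: there is `κ > 0` with
`zᵀ H(u) A(u) z ≥ κ (z1²/u1 + z2²/u2)` uniformly in `u`. -/
theorem maxwellStefan_H2_half
    (d0 d1 d2 : ℝ) (hd0 : 0 < d0) (hd1 : 0 < d1) (hd2 : 0 < d2) :
    ∃ κ : ℝ, 0 < κ ∧
      ∀ u1 u2 : ℝ, 0 < u1 → 0 < u2 → u1 + u2 < 1 →
        ∀ z : Fin 2 → ℝ,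
          κ * ((z 0) ^ 2 / u1 + (z 1) ^ 2 / u2)
            ≤ z ⬝ᵥ ((msH u1 u2 * msA d0 d1 d2 u1 u2) *ᵥ z) := by
  set Mx : ℝ := max (d1 * d2) (max (d0 * d1) (d0 * d2)) with hMx
  clear_value Mx
  have hMxpos : 0 < Mx := by rw [hMx]; exact lt_max_iff.2 (Or.inl (by positivity))
  refine ⟨min d1 d2 / Mx, by positivity, ?_⟩
  intro u1 u2 hu1 hu2 hu12 z
  set u3 : ℝ := 1 - u1 - u2 with hu3def
  clear_value u3
  have hu3 : 0 < u3 := by rw [hu3def]; linarith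
  set a : ℝ := d1 * d2 * (1 - u1 - u2) + d0 * (d1 * u1 + d2 * u2) with ha
  clear_value a
  have hapos : 0 < a := by
    have h1 : 0 < d1 * d2 * (1 - u1 - u2) := by
      have : 0 < 1 - u1 - u2 := by linarith
      positivity
    have h2 : 0 ≤ d0 * (d1 * u1 + d2 * u2) := by positivity
    rw [ha]; linarith
  have key : z ⬝ᵥ ((msH u1 u2 * msA d0 d1 d2 u1 u2) *ᵥ z)
      = (d2 * (z 0) ^ 2 / u1 + d1 * (z 1) ^ 2 / u2 + d0 * (z 0 + z 1) ^ 2 / u3) / a := by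
    simp only [msH, msA, Matrix.mul_smul, Matrix.smul_mulVec,
      dotProduct, Matrix.mulVec, Matrix.mul_apply, Fin.sum_univ_two,
      Matrix.smul_apply, Matrix.cons_val', Matrix.cons_val_zero, Matrix.cons_val_one,
      Matrix.head_cons, Matrix.head_fin_const, Matrix.empty_val',
      Matrix.cons_val_fin_one, Matrix.of_apply, smul_eq_mul]
    rw [hu3def, ha]
    have h3 : (1 : ℝ) - u1 - u2 ≠ 0 := by linarith
    have hA : d1 * d2 * (1 - u1 - u2) + d0 * (d1 * u1 + d2 * u2) ≠ 0 := by
      rw [← ha]; exact hapos.ne'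
    field_simp
    ring
  rw [key]
  have haM : a ≤ Mx := by
    have m1 : d1 * d2 ≤ Mx := by rw [hMx]; exact le_max_left _ _
    have m2 : d0 * d1 ≤ Mx := by rw [hMx]; exact (le_max_left _ _).trans (le_max_right _ _)
    have m3 : d0 * d2 ≤ Mx := by rw [hMx]; exact (le_max_right _ _).trans (le_max_right _ _)
    have h1 : d1 * d2 * u3 ≤ Mx * u3 := mul_le_mul_of_nonneg_right m1 hu3.le
    have h2 : d0 * d1 * u1 ≤ Mx * u1 := mul_le_mul_of_nonneg_right m2 hu1.le
    have h3 : d0 * d2 * u2 ≤ Mx * u2 := mul_le_mul_of_nonneg_right m3 hu2.le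
    have h4 : Mx * u3 + Mx * u1 + Mx * u2 = Mx := by rw [hu3def]; ring
    rw [ha, hu3def] at *
    nlinarith [h1, h2, h3, h4]
  have hsum : min d1 d2 * ((z 0) ^ 2 / u1 + (z 1) ^ 2 / u2)
      ≤ d2 * (z 0) ^ 2 / u1 + d1 * (z 1) ^ 2 / u2 + d0 * (z 0 + z 1) ^ 2 / u3 := by
    have e1 : min d1 d2 * ((z 0) ^ 2 / u1) ≤ d2 * (z 0) ^ 2 / u1 := by
      rw [mul_div_assoc]
      gcongr
      exact min_le_right _ _
    have e2 : min d1 d2 * ((z 1) ^ 2 / u2) ≤ d1 * (z 1) ^ 2 / u2 := by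
      rw [mul_div_assoc]
      gcongr
      exact min_le_left _ _
    have e3 : (0:ℝ) ≤ d0 * (z 0 + z 1) ^ 2 / u3 := by positivity
    have expand : min d1 d2 * ((z 0) ^ 2 / u1 + (z 1) ^ 2 / u2)
        = min d1 d2 * ((z 0) ^ 2 / u1) + min d1 d2 * ((z 1) ^ 2 / u2) := by ring
    rw [expand]
    linarith
  calc min d1 d2 / Mx * ((z 0) ^ 2 / u1 + (z 1) ^ 2 / u2)
      ≤ min d1 d2 / a * ((z 0) ^ 2 / u1 + (z 1) ^ 2 / u2) := by
        gcongr min d1 d2 / ?_ * _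
    _ = min d1 d2 * ((z 0) ^ 2 / u1 + (z 1) ^ 2 / u2) / a := by ring
    _ ≤ (d2 * (z 0) ^ 2 / u1 + d1 * (z 1) ^ 2 / u2 + d0 * (z 0 + z 1) ^ 2 / u3) / a := by
        gcongr
end

section
/- Let a₁₀, a₁₁, a₁₂, a₂₀, a₂₁, a₂₂ ≥ 0 and let u₁, u₂ > 0. Then for every z = (z₁, z₂) ∈ ℝ², the SKT diffusion matrix A(u) and the entropy Hessian H(u) satisfy the identity zᵀ H(u) A(u) z = a₂₁ (a₁₀/u₁ + a₁₁) z₁² + a₁₂ (a₂₀/u₂ + a₂₂) z₂² + a₁₂ a₂₁ (u₂ z₁ + u₁ z₂)² / (u₁ u₂). -/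
open Matrix

/-- Diffusion matrix of the two-species SKT population model. -/
def sktA (a10 a11 a12 a20 a21 a22 u1 u2 : ℝ) : Matrix (Fin 2) (Fin 2) ℝ :=
  !![a10 + a11 * u1 + a12 * u2, a12 * u1;
     a21 * u2, a20 + a21 * u1 + a22 * u2]

/-- Hessian of the SKT entropy density `h(u) = a21 u1 (log u1 - 1) + a12 u2 (log u2 - 1)`. -/
noncomputable def sktH (a12 a21 u1 u2 : ℝ) : Matrix (Fin 2) (Fin 2) ℝ :=
  !![a21 / u1, 0; 0, a12 / u2]

/-- Entropy-production identity for the two-species SKT model: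
`zᵀ H(u) A(u) z = a21 (a10/u1 + a11) z1² + a12 (a20/u2 + a22) z2²
  + a12 a21 (u2 z1 + u1 z2)² / (u1 u2)`. -/
theorem skt_entropy_identity
    (a10 a11 a12 a20 a21 a22 u1 u2 : ℝ)
    (h10 : 0 ≤ a10) (h11 : 0 ≤ a11) (h12 : 0 ≤ a12)
    (h20 : 0 ≤ a20) (h21 : 0 ≤ a21) (h22 : 0 ≤ a22)
    (hu1 : 0 < u1) (hu2 : 0 < u2) (z : Fin 2 → ℝ) :
    z ⬝ᵥ ((sktH a12 a21 u1 u2 * sktA a10 a11 a12 a20 a21 a22 u1 u2) *ᵥ z)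
      = a21 * (a10 / u1 + a11) * (z 0) ^ 2 + a12 * (a20 / u2 + a22) * (z 1) ^ 2
        + a12 * a21 * (u2 * z 0 + u1 * z 1) ^ 2 / (u1 * u2) := by
  simp [sktA, sktH, dotProduct, Matrix.mulVec, Matrix.mul_apply, Fin.sum_univ_two]
  field_simp
  ring
end

section
/- Let a₁₀, a₁₁, a₁₂, a₂₀, a₂₁, a₂₂ ≥ 0 and let u₁, u₂ > 0. Then the matrix product H(u) A(u) of the SKT entropy Hessian and diffusion matrix is positive semidefinite: zᵀ H(u) A(u) z ≥ 0 for all z ∈ ℝ². -/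
open Matrix

/-- The product `H(u) A(u)` of the SKT entropy Hessian and diffusion matrix is
positive semidefinite. -/
theorem skt_HA_posSemidef
    (a10 a11 a12 a20 a21 a22 u1 u2 : ℝ)
    (h10 : 0 ≤ a10) (h11 : 0 ≤ a11) (h12 : 0 ≤ a12)
    (h20 : 0 ≤ a20) (h21 : 0 ≤ a21) (h22 : 0 ≤ a22)
    (hu1 : 0 < u1) (hu2 : 0 < u2) :
    ∀ z : Fin 2 → ℝ,
      0 ≤ z ⬝ᵥ ((sktH a12 a21 u1 u2 * sktA a10 a11 a12 a20 a21 a22 u1 u2) *ᵥ z) := by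
  intro z
  simp [sktA, sktH, dotProduct, Matrix.mulVec, Matrix.mul_apply,
    Fin.sum_univ_two, div_eq_mul_inv]
  have key : z 0 * (a21 * u1⁻¹ * (a10 + a11 * u1 + a12 * u2) * z 0 + a21 * u1⁻¹ * (a12 * u1) * z 1) +
      z 1 * (a12 * u2⁻¹ * (a21 * u2) * z 0 + a12 * u2⁻¹ * (a20 + a21 * u1 + a22 * u2) * z 1)
      = a21 * u1⁻¹ * a10 * z 0 ^ 2 + a21 * a11 * z 0 ^ 2
        + a12 * u2⁻¹ * a20 * z 1 ^ 2 + a12 * a22 * z 1 ^ 2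
        + a12 * a21 * (u1⁻¹ * u2⁻¹) * (u2 * z 0 + u1 * z 1) ^ 2 := by
    field_simp
    ring
  rw [key]
  have hi1 : (0:ℝ) ≤ u1⁻¹ := (inv_pos.2 hu1).le
  have hi2 : (0:ℝ) ≤ u2⁻¹ := (inv_pos.2 hu2).le
  have t1 : 0 ≤ a21 * u1⁻¹ * a10 * z 0 ^ 2 := by positivity
  have t2 : 0 ≤ a21 * a11 * z 0 ^ 2 := by positivity
  have t3 : 0 ≤ a12 * u2⁻¹ * a20 * z 1 ^ 2 := by positivity
  have t4 : 0 ≤ a12 * a22 * z 1 ^ 2 := by positivity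
  have t5 : 0 ≤ a12 * a21 * (u1⁻¹ * u2⁻¹) * (u2 * z 0 + u1 * z 1) ^ 2 := by positivity
  linarith
end

section
/- Let a₁₁, a₁₂, a₂₂, a₂₁ ≥ 0 and a₁₀, a₂₀ > 0 with a₁₂, a₂₁ > 0, and set κ = min(a₂₁a₁₀, a₁₂a₂₀) > 0. Then for all u₁, u₂ > 0 and all z = (z₁, z₂) ∈ ℝ²: zᵀ H(u) A(u) z ≥ κ ( z₁²/u₁ + z₂²/u₂ ). In particular, the two-species SKT model satisfies hypothesis (H2) of the boundedness-by-entropy method with exponent m = 1/2. -/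
open Matrix

/-- Hypothesis (H2) with exponent `m = 1/2` for the two-species SKT model:
with `κ = min(a21 a10, a12 a20) > 0` one has
`zᵀ H(u) A(u) z ≥ κ (z1²/u1 + z2²/u2)`. -/
theorem skt_H2_half
    (a10 a11 a12 a20 a21 a22 : ℝ)
    (h11 : 0 ≤ a11) (h12 : 0 < a12) (h21 : 0 < a21) (h22 : 0 ≤ a22)
    (h10 : 0 < a10) (h20 : 0 < a20) :
    0 < min (a21 * a10) (a12 * a20) ∧
    ∀ u1 u2 : ℝ, 0 < u1 → 0 < u2 →
      ∀ z : Fin 2 → ℝ,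
        min (a21 * a10) (a12 * a20) * ((z 0) ^ 2 / u1 + (z 1) ^ 2 / u2)
          ≤ z ⬝ᵥ ((sktH a12 a21 u1 u2 * sktA a10 a11 a12 a20 a21 a22 u1 u2) *ᵥ z) := by
  refine ⟨lt_min (by positivity) (by positivity), ?_⟩
  intro u1 u2 hu1 hu2 z
  have hk1 : min (a21 * a10) (a12 * a20) ≤ a21 * a10 := min_le_left _ _
  have hk2 : min (a21 * a10) (a12 * a20) ≤ a12 * a20 := min_le_right _ _
  simp [sktA, sktH, Matrix.mul_fin_two, Matrix.mulVec, dotProduct, Fin.sum_univ_two]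
  have h1 : u1 ≠ 0 := ne_of_gt hu1
  have h2 : u2 ≠ 0 := ne_of_gt hu2
  rw [div_add_div _ _ h1 h2, ← mul_div_assoc, div_le_iff₀ (by positivity)]
  have key : 0 ≤ a12 * a21 * (u2 * z 0 + u1 * z 1)^2 := by positivity
  field_simp
  nlinarith [sq_nonneg (z 0), sq_nonneg (z 1), mul_pos hu1 hu2,
    mul_nonneg (mul_nonneg h11 hu1.le) (sq_nonneg (z 0)),
    mul_nonneg (mul_nonneg h22 hu2.le) (sq_nonneg (z 1)),
    mul_nonneg (mul_nonneg (mul_nonneg h21.le hu1.le) hu2.le) (sq_nonneg (z 1)),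
    mul_nonneg (mul_nonneg (mul_nonneg h12.le hu2.le) hu1.le) (sq_nonneg (z 0)),
    mul_le_mul_of_nonneg_right hk1 (mul_nonneg (sq_nonneg (z 0)) hu2.le),
    mul_le_mul_of_nonneg_right hk2 (mul_nonneg (sq_nonneg (z 1)) hu1.le),
    mul_nonneg (mul_nonneg (mul_nonneg (mul_nonneg h21.le h11) hu1.le) hu2.le) (sq_nonneg (z 0)),
    mul_nonneg (mul_nonneg (mul_nonneg (mul_nonneg h12.le h22) hu1.le) hu2.le) (sq_nonneg (z 1))]
end

section
/- Let a₁₀, a₁₂, a₂₀, a₂₁ ≥ 0 and a₁₁, a₂₂ > 0 with a₁₂, a₂₁ > 0, and set κ = min(a₂₁a₁₁, a₁₂a₂₂) > 0. Then for all u₁, u₂ > 0 and all z = (z₁, z₂) ∈ ℝ²: zᵀ H(u) A(u) z ≥ κ ( z₁² + z₂² ). In particular, in the presence of self-diffusion the two-species SKT model satisfies hypothesis (H2) of the boundedness-by-entropy method with exponent m = 1, and H(u)A(u) is positive definite. -/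
open Matrix

/-- Hypothesis (H2) with exponent `m = 1` for the two-species SKT model with
self-diffusion: with `κ = min(a21 a11, a12 a22) > 0` one has
`zᵀ H(u) A(u) z ≥ κ (z1² + z2²)`; in particular `H(u) A(u)` is positive definite. -/
theorem skt_H2_one_selfDiffusion
    (a10 a11 a12 a20 a21 a22 : ℝ)
    (h10 : 0 ≤ a10) (h20 : 0 ≤ a20)
    (h11 : 0 < a11) (h22 : 0 < a22) (h12 : 0 < a12) (h21 : 0 < a21) :
    0 < min (a21 * a11) (a12 * a22) ∧
    (∀ u1 u2 : ℝ, 0 < u1 → 0 < u2 →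
      ∀ z : Fin 2 → ℝ,
        min (a21 * a11) (a12 * a22) * ((z 0) ^ 2 + (z 1) ^ 2)
          ≤ z ⬝ᵥ ((sktH a12 a21 u1 u2 * sktA a10 a11 a12 a20 a21 a22 u1 u2) *ᵥ z)) ∧
    (∀ u1 u2 : ℝ, 0 < u1 → 0 < u2 →
      ∀ z : Fin 2 → ℝ, z ≠ 0 →
        0 < z ⬝ᵥ ((sktH a12 a21 u1 u2 * sktA a10 a11 a12 a20 a21 a22 u1 u2) *ᵥ z)) := by
  constructor
  · exact lt_min (mul_pos h21 h11) (mul_pos h12 h22)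
  have key : ∀ u1 u2 : ℝ, 0 < u1 → 0 < u2 → ∀ z : Fin 2 → ℝ,
      min (a21 * a11) (a12 * a22) * ((z 0) ^ 2 + (z 1) ^ 2)
        ≤ z ⬝ᵥ ((sktH a12 a21 u1 u2 * sktA a10 a11 a12 a20 a21 a22 u1 u2) *ᵥ z) := by
    intro u1 u2 hu1 hu2 z
    have hQ : z ⬝ᵥ ((sktH a12 a21 u1 u2 * sktA a10 a11 a12 a20 a21 a22 u1 u2) *ᵥ z)
        = (a21*(a10+a11*u1+a12*u2)/u1)*z 0^2 + 2*a12*a21*(z 0*z 1)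
          + (a12*(a20+a21*u1+a22*u2)/u2)*z 1^2 := by
      simp [sktH, sktA, Matrix.mul_apply, mulVec, dotProduct, Fin.sum_univ_two]
      field_simp
      ring
    rw [hQ, ← mul_le_mul_iff_of_pos_right (mul_pos hu1 hu2)]
    have hrw : ((a21*(a10+a11*u1+a12*u2)/u1)*z 0^2 + 2*a12*a21*(z 0*z 1)
          + (a12*(a20+a21*u1+a22*u2)/u2)*z 1^2) * (u1*u2)
        = a21*(a10+a11*u1+a12*u2)*u2*z 0^2 + 2*a12*a21*(z 0*z 1)*(u1*u2)
          + a12*(a20+a21*u1+a22*u2)*u1*z 1^2 := by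
      field_simp
    rw [hrw]
    have hk1 : min (a21 * a11) (a12 * a22) ≤ a21 * a11 := min_le_left _ _
    have hk2 : min (a21 * a11) (a12 * a22) ≤ a12 * a22 := min_le_right _ _
    have hid : a21*(a10+a11*u1+a12*u2)*u2*z 0^2 + 2*a12*a21*(z 0*z 1)*(u1*u2)
          + a12*(a20+a21*u1+a22*u2)*u1*z 1^2
        = a21*a11*(z 0^2*(u1*u2)) + a12*a22*(z 1^2*(u1*u2))
          + a21*a10*u2*z 0^2 + a12*a20*u1*z 1^2 + a12*a21*(u2*z 0+u1*z 1)^2 := by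
      ring
    rw [hid]
    have e1 : min (a21 * a11) (a12 * a22) * (z 0^2*(u1*u2)) ≤ a21*a11*(z 0^2*(u1*u2)) :=
      mul_le_mul_of_nonneg_right hk1 (by positivity)
    have e2 : min (a21 * a11) (a12 * a22) * (z 1^2*(u1*u2)) ≤ a12*a22*(z 1^2*(u1*u2)) :=
      mul_le_mul_of_nonneg_right hk2 (by positivity)
    have e3 : 0 ≤ a21*a10*u2*z 0^2 := by positivity
    have e4 : 0 ≤ a12*a20*u1*z 1^2 := by positivity
    have e5 : 0 ≤ a12*a21*(u2*z 0+u1*z 1)^2 := by positivity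
    nlinarith [e1, e2, e3, e4, e5]
  refine ⟨key, fun u1 u2 hu1 hu2 z hz => ?_⟩
  have hpos : 0 < (z 0) ^ 2 + (z 1) ^ 2 := by
    rcases Classical.em (z 0 = 0) with h0 | h0
    · have h1 : z 1 ≠ 0 := by
        intro h1
        apply hz
        funext i
        fin_cases i <;> simpa [h0, h1]
      positivity
    · positivity
  calc (0:ℝ) < min (a21 * a11) (a12 * a22) * ((z 0) ^ 2 + (z 1) ^ 2) :=
        mul_pos (lt_min (mul_pos h21 h11) (mul_pos h12 h22)) hpos
    _ ≤ _ := key u1 u2 hu1 hu2 z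
end

section
/- Let n ≥ 1, let aᵢⱼ ≥ 0 for i = 1,…,n and j = 0,1,…,n, and suppose there exist π₁,…,πₙ > 0 satisfying the detailed-balance condition πᵢ aᵢⱼ = πⱼ aⱼᵢ for all i, j = 1,…,n. Let u₁,…,uₙ > 0. Then for every z ∈ ℝⁿ, the n-species SKT diffusion matrix A(u) and the entropy Hessian H(u) = diag(π₁/u₁,…,πₙ/uₙ) satisfy the identity zᵀ H(u) A(u) z = Σᵢ πᵢ (aᵢ₀/uᵢ + 2aᵢᵢ) zᵢ² + Σ_{i<j} πᵢ aᵢⱼ (uⱼ zᵢ + uᵢ zⱼ)² / (uᵢ uⱼ). -/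
open Matrix

/-- Diffusion matrix of the `n`-species SKT population model:
`A i j = δᵢⱼ (a0 i + ∑ₖ a i k * u k) + a i j * u i`. -/
noncomputable def sktAn (n : ℕ) (a0 : Fin n → ℝ) (a : Fin n → Fin n → ℝ)
    (u : Fin n → ℝ) : Matrix (Fin n) (Fin n) ℝ :=
  fun i j => (if i = j then a0 i + ∑ k, a i k * u k else 0) + a i j * u i

/-- Hessian `diag(π i / u i)` of the entropy density `h(u) = ∑ᵢ πᵢ uᵢ (log uᵢ - 1)`. -/
noncomputable def sktHn (n : ℕ) (π : Fin n → ℝ) (u : Fin n → ℝ) :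
    Matrix (Fin n) (Fin n) ℝ :=
  Matrix.diagonal (fun i => π i / u i)

/-- Entropy-production identity for the `n`-species SKT model under detailed balance:
`zᵀ H(u) A(u) z = ∑ᵢ πᵢ (aᵢ₀/uᵢ + 2aᵢᵢ) zᵢ²
  + ∑_{i<j} πᵢ aᵢⱼ (uⱼ zᵢ + uᵢ zⱼ)² / (uᵢ uⱼ)`. -/
theorem sktn_entropy_identity
    (n : ℕ) (hn : 1 ≤ n) (a0 : Fin n → ℝ) (a : Fin n → Fin n → ℝ)
    (ha0 : ∀ i, 0 ≤ a0 i) (ha : ∀ i j, 0 ≤ a i j)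
    (π : Fin n → ℝ) (hπ : ∀ i, 0 < π i)
    (hdb : ∀ i j, π i * a i j = π j * a j i)
    (u : Fin n → ℝ) (hu : ∀ i, 0 < u i) (z : Fin n → ℝ) :
    z ⬝ᵥ ((sktHn n π u * sktAn n a0 a u) *ᵥ z)
      = ∑ i, π i * (a0 i / u i + 2 * a i i) * (z i) ^ 2
        + ∑ i, ∑ j, (if i < j then
            π i * a i j * (u j * z i + u i * z j) ^ 2 / (u i * u j) else 0) := by
  have hu' : ∀ i, u i ≠ 0 := fun i => (hu i).ne'
  set Q : Fin n → Fin n → ℝ := fun i j =>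
    π i * a i j * (u j * z i ^ 2 / u i + z i * z j) with hQ
  have hM : ∀ i j, (sktHn n π u * sktAn n a0 a u) i j
      = π i / u i * ((if i = j then a0 i + ∑ k, a i k * u k else 0) + a i j * u i) := by
    intro i j
    simp [sktHn, sktAn, Matrix.diagonal_mul]
  have hL : z ⬝ᵥ ((sktHn n π u * sktAn n a0 a u) *ᵥ z)
      = ∑ i, π i * a0 i / u i * z i ^ 2 + ∑ i, ∑ j, Q i j := by
    simp only [dotProduct, mulVec, hM, hQ, mul_add, add_mul, mul_ite, ite_mul, mul_zero,
      zero_mul, Finset.sum_add_distrib, Finset.sum_ite_eq, Finset.mem_univ, if_true]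
    rw [add_assoc]
    congr 1
    · exact Finset.sum_congr rfl fun i _ => by field_simp [hu' i]
    · congr 1
      · refine Finset.sum_congr rfl fun i _ => ?_
        simp only [Finset.mul_sum, Finset.sum_mul]
        exact Finset.sum_congr rfl fun j _ => by field_simp [hu' i]
      · refine Finset.sum_congr rfl fun i _ => ?_
        rw [Finset.mul_sum]
        exact Finset.sum_congr rfl fun j _ => by field_simp [hu' i]
  rw [hL]
  have hdiag : ∑ i, π i * (a0 i / u i + 2 * a i i) * (z i) ^ 2
      = ∑ i, π i * a0 i / u i * z i ^ 2 + ∑ i, Q i i := by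
    rw [← Finset.sum_add_distrib]
    refine Finset.sum_congr rfl fun i _ => ?_
    simp only [hQ]
    field_simp [hu' i]; ring
  rw [hdiag, add_assoc]
  congr 1
  -- remains: ∑ i, ∑ j, Q i j = ∑ i, Q i i + ∑ i, ∑ j, (if i < j then F i j else 0)
  have hsplit : ∀ i j : Fin n, Q i j =
      (if i = j then Q i j else 0) + (if i < j then Q i j else 0)
        + (if j < i then Q i j else 0) := by
    intro i j
    rcases lt_trichotomy i j with h | h | h
    · simp [h, h.ne, not_lt_of_gt h]
    · simp [h, lt_irrefl]
    · simp [h, h.ne', not_lt_of_gt h]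
  calc ∑ i, ∑ j, Q i j
      = ∑ i, ∑ j, ((if i = j then Q i j else 0) + (if i < j then Q i j else 0)
          + (if j < i then Q i j else 0)) := by
        refine Finset.sum_congr rfl fun i _ => Finset.sum_congr rfl fun j _ => hsplit i j
    _ = (∑ i, ∑ j, if i = j then Q i j else 0) + (∑ i, ∑ j, if i < j then Q i j else 0)
          + ∑ i, ∑ j, if j < i then Q i j else 0 := by
        simp [Finset.sum_add_distrib]
    _ = (∑ i, Q i i) + (∑ i, ∑ j, if i < j then Q i j else 0)
          + ∑ i, ∑ j, if i < j then Q j i else 0 := by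
        congr 1
        · congr 1
          refine Finset.sum_congr rfl fun i _ => ?_
          simp [Finset.sum_ite_eq]
        · rw [Finset.sum_comm]
    _ = ∑ i, Q i i + ∑ i, ∑ j, (if i < j then
          π i * a i j * (u j * z i + u i * z j) ^ 2 / (u i * u j) else 0) := by
        rw [add_assoc]
        congr 1
        rw [← Finset.sum_add_distrib]
        refine Finset.sum_congr rfl fun i _ => ?_
        rw [← Finset.sum_add_distrib]
        refine Finset.sum_congr rfl fun j _ => ?_
        by_cases h : i < j
        · simp only [h, if_true]
          have db : π j * a j i = π i * a i j := hdb j i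
          simp only [hQ]
          rw [db]
          field_simp [hu' i, hu' j]
          ring
        · simp [h]
end

section
/- Let n ≥ 1, let aᵢⱼ ≥ 0 for i = 1,…,n and j = 0,1,…,n, and suppose there exist π₁,…,πₙ > 0 satisfying the detailed-balance condition πᵢ aᵢⱼ = πⱼ aⱼᵢ for all i, j = 1,…,n. Let u₁,…,uₙ > 0. Then the matrix H(u) A(u) is positive semidefinite, and more precisely zᵀ H(u) A(u) z ≥ Σᵢ πᵢ (aᵢ₀/uᵢ + 2aᵢᵢ) zᵢ² for all z ∈ ℝⁿ; in particular, if aᵢᵢ > 0 for all i (self-diffusion), then H(u)A(u) is positive definite and zᵀ H(u) A(u) z ≥ 2 minᵢ(πᵢaᵢᵢ) |z|². -/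
open Matrix

/-- Entropy-production lower bound for the `n`-species SKT model under detailed
balance: `H(u) A(u)` is positive semidefinite, more precisely
`zᵀ H(u) A(u) z ≥ ∑ᵢ πᵢ (aᵢ₀/uᵢ + 2aᵢᵢ) zᵢ²`; with self-diffusion `aᵢᵢ > 0`
it is positive definite, with `zᵀ H(u) A(u) z ≥ 2 minᵢ(πᵢ aᵢᵢ) |z|²`. -/
theorem sktn_entropy_lower_bound
    (n : ℕ) (hn : 1 ≤ n) (a0 : Fin n → ℝ) (a : Fin n → Fin n → ℝ)
    (ha0 : ∀ i, 0 ≤ a0 i) (ha : ∀ i j, 0 ≤ a i j)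
    (π : Fin n → ℝ) (hπ : ∀ i, 0 < π i)
    (hdb : ∀ i j, π i * a i j = π j * a j i)
    (u : Fin n → ℝ) (hu : ∀ i, 0 < u i) :
    (∀ z : Fin n → ℝ, 0 ≤ z ⬝ᵥ ((sktHn n π u * sktAn n a0 a u) *ᵥ z)) ∧
    (∀ z : Fin n → ℝ,
      ∑ i, π i * (a0 i / u i + 2 * a i i) * (z i) ^ 2
        ≤ z ⬝ᵥ ((sktHn n π u * sktAn n a0 a u) *ᵥ z)) ∧
    ((∀ i, 0 < a i i) →
      (∀ z : Fin n → ℝ, z ≠ 0 →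
        0 < z ⬝ᵥ ((sktHn n π u * sktAn n a0 a u) *ᵥ z)) ∧
      (∀ z : Fin n → ℝ,
        2 * (Finset.univ.inf' (Finset.univ_nonempty_iff.mpr ⟨⟨0, hn⟩⟩)
            fun i => π i * a i i) * (∑ i, (z i) ^ 2)
          ≤ z ⬝ᵥ ((sktHn n π u * sktAn n a0 a u) *ᵥ z))) := by
  -- Key identity: the quadratic form equals the a0-term plus half a sum of squares.
  have hHA : ∀ z : Fin n → ℝ, z ⬝ᵥ ((sktHn n π u * sktAn n a0 a u) *ᵥ z)
      = (∑ i, π i * a0 i / u i * z i ^ 2)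
        + (1/2) * ∑ i, ∑ j, π i * a i j * (u j * z i + u i * z j) ^ 2 / (u i * u j) := by
    intro z
    have hMij : ∀ i j, (sktHn n π u * sktAn n a0 a u) i j
        = π i / u i * ((if i = j then a0 i + ∑ k, a i k * u k else 0) + a i j * u i) := by
      intro i j
      simp [sktHn, sktAn, Matrix.diagonal_mul]
    have expand : z ⬝ᵥ ((sktHn n π u * sktAn n a0 a u) *ᵥ z)
        = ∑ i, (π i * a0 i / u i * z i ^ 2
            + ((∑ j, π i * a i j * u j / u i * z i ^ 2)
              + ∑ j, π i * a i j * z i * z j)) := by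
      simp only [dotProduct, Matrix.mulVec, hMij]
      refine Finset.sum_congr rfl fun i _ => ?_
      have hui : (u i : ℝ) ≠ 0 := (hu i).ne'
      rw [Finset.mul_sum]
      have step : ∀ j, z i * (π i / u i *
            ((if i = j then a0 i + ∑ k, a i k * u k else 0) + a i j * u i) * z j)
          = (if i = j then π i / u i * (a0 i + ∑ k, a i k * u k) * z i * z j else 0)
            + π i * a i j * z i * z j := by
        intro j
        by_cases h : i = j
        · subst h
          rw [if_pos rfl, if_pos rfl]
          field_simp
        · simp only [if_neg h]
          field_simp
          ring
      rw [Finset.sum_congr rfl fun j _ => step j, Finset.sum_add_distrib,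
        Finset.sum_ite_eq Finset.univ i]
      simp only [Finset.mem_univ, if_true]
      have hs : (∑ j, π i * a i j * u j / u i * z i ^ 2)
          = (∑ j, a i j * u j) * (π i / u i) * z i ^ 2 := by
        rw [Finset.sum_mul, Finset.sum_mul]
        exact Finset.sum_congr rfl fun j _ => by ring
      rw [hs]; ring
    rw [expand]
    have key : ∀ i j, π i * a i j * (u j * z i + u i * z j) ^ 2 / (u i * u j)
        = π i * a i j * u j / u i * z i ^ 2 + 2 * (π i * a i j * z i * z j)
          + π i * a i j * u i / u j * z j ^ 2 := by
      intro i j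
      have hui : (u i : ℝ) ≠ 0 := (hu i).ne'
      have huj : (u j : ℝ) ≠ 0 := (hu j).ne'
      field_simp
      ring
    have swap : (∑ i, ∑ j, π i * a i j * u i / u j * z j ^ 2)
        = ∑ i, ∑ j, π i * a i j * u j / u i * z i ^ 2 := by
      rw [Finset.sum_comm]
      exact Finset.sum_congr rfl fun i _ => Finset.sum_congr rfl fun j _ => by
        rw [hdb j i]
    calc (∑ i, (π i * a0 i / u i * z i ^ 2
            + ((∑ j, π i * a i j * u j / u i * z i ^ 2)
              + ∑ j, π i * a i j * z i * z j)))
        = (∑ i, π i * a0 i / u i * z i ^ 2)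
          + ((∑ i, ∑ j, π i * a i j * u j / u i * z i ^ 2)
            + ∑ i, ∑ j, π i * a i j * z i * z j) := by
          rw [Finset.sum_add_distrib, Finset.sum_add_distrib]
      _ = (∑ i, π i * a0 i / u i * z i ^ 2)
          + (1/2) * ∑ i, ∑ j, π i * a i j * (u j * z i + u i * z j) ^ 2 / (u i * u j) := by
          congr 1
          have : (∑ i, ∑ j, π i * a i j * (u j * z i + u i * z j) ^ 2 / (u i * u j))
              = (∑ i, ∑ j, π i * a i j * u j / u i * z i ^ 2)
                + 2 * (∑ i, ∑ j, π i * a i j * z i * z j)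
                + ∑ i, ∑ j, π i * a i j * u i / u j * z j ^ 2 := by
            calc (∑ i, ∑ j, π i * a i j * (u j * z i + u i * z j) ^ 2 / (u i * u j))
                = ∑ i, ((∑ j, π i * a i j * u j / u i * z i ^ 2)
                    + 2 * (∑ j, π i * a i j * z i * z j)
                    + ∑ j, π i * a i j * u i / u j * z j ^ 2) := by
                  refine Finset.sum_congr rfl fun i _ => ?_
                  simp only [key]
                  rw [Finset.sum_add_distrib, Finset.sum_add_distrib, ← Finset.mul_sum]
              _ = _ := by
                  rw [Finset.sum_add_distrib, Finset.sum_add_distrib, ← Finset.mul_sum]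
          rw [this, swap]; ring
  -- nonnegativity of each square term
  have hterm : ∀ (z : Fin n → ℝ) i j,
      0 ≤ π i * a i j * (u j * z i + u i * z j) ^ 2 / (u i * u j) := by
    intro z i j
    apply div_nonneg
    · exact mul_nonneg (mul_nonneg (hπ i).le (ha i j)) (sq_nonneg _)
    · exact mul_nonneg (hu i).le (hu j).le
  -- the main lower bound
  have hbound : ∀ z : Fin n → ℝ,
      ∑ i, π i * (a0 i / u i + 2 * a i i) * (z i) ^ 2
        ≤ z ⬝ᵥ ((sktHn n π u * sktAn n a0 a u) *ᵥ z) := by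
    intro z
    rw [hHA z, Finset.mul_sum, ← Finset.sum_add_distrib]
    refine Finset.sum_le_sum fun i _ => ?_
    have hdiag : π i * a i i * (u i * z i + u i * z i) ^ 2 / (u i * u i)
        ≤ ∑ j, π i * a i j * (u j * z i + u i * z j) ^ 2 / (u i * u j) :=
      Finset.single_le_sum (fun j _ => hterm z i j) (Finset.mem_univ i)
    have hval : π i * a i i * (u i * z i + u i * z i) ^ 2 / (u i * u i)
        = 4 * (π i * a i i * z i ^ 2) := by
      have hui : (u i : ℝ) ≠ 0 := (hu i).ne'
      field_simp; ring
    have : π i * (a0 i / u i + 2 * a i i) * z i ^ 2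
        = π i * a0 i / u i * z i ^ 2 + (1/2) * (4 * (π i * a i i * z i ^ 2)) := by
      have hui : (u i : ℝ) ≠ 0 := (hu i).ne'
      field_simp; ring
    rw [this]
    have := mul_le_mul_of_nonneg_left (hval ▸ hdiag) (by norm_num : (0:ℝ) ≤ 1/2)
    linarith
  have hsumnn : ∀ z : Fin n → ℝ,
      0 ≤ ∑ i, π i * (a0 i / u i + 2 * a i i) * (z i) ^ 2 := by
    intro z
    refine Finset.sum_nonneg fun i _ => ?_
    have h1 : 0 ≤ a0 i / u i + 2 * a i i := by
      have := div_nonneg (ha0 i) (hu i).le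
      have := ha i i
      linarith
    exact mul_nonneg (mul_nonneg (hπ i).le h1) (sq_nonneg _)
  refine ⟨fun z => le_trans (hsumnn z) (hbound z), hbound, fun haa => ?_⟩
  set m := Finset.univ.inf' (Finset.univ_nonempty_iff.mpr ⟨⟨0, hn⟩⟩)
      (fun i => π i * a i i) with hm
  have hmle : ∀ i, m ≤ π i * a i i := fun i =>
    Finset.inf'_le _ (Finset.mem_univ i)
  have hmid : ∀ z : Fin n → ℝ,
      2 * m * (∑ i, (z i) ^ 2) ≤ ∑ i, π i * (a0 i / u i + 2 * a i i) * (z i) ^ 2 := by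
    intro z
    rw [Finset.mul_sum]
    refine Finset.sum_le_sum fun i _ => ?_
    have h1 : 2 * m * z i ^ 2 ≤ 2 * (π i * a i i) * z i ^ 2 := by
      have := mul_le_mul_of_nonneg_right (hmle i) (sq_nonneg (z i))
      nlinarith [sq_nonneg (z i)]
    have h2 : 0 ≤ π i * (a0 i / u i) * z i ^ 2 :=
      mul_nonneg (mul_nonneg (hπ i).le (div_nonneg (ha0 i) (hu i).le)) (sq_nonneg _)
    nlinarith
  constructor
  · intro z hz
    obtain ⟨i, hi⟩ := Function.ne_iff.mp hz
    have hi' : z i ≠ 0 := hi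
    have hzi : (0:ℝ) < z i ^ 2 := by positivity
    have hsum : 0 < ∑ i, (z i) ^ 2 :=
      Finset.sum_pos' (fun j _ => sq_nonneg _) ⟨i, Finset.mem_univ i, hzi⟩
    have hmpos : 0 < m := by
      rw [hm, Finset.lt_inf'_iff]
      exact fun i _ => mul_pos (hπ i) (haa i)
    calc (0:ℝ) < 2 * m * (∑ i, (z i) ^ 2) :=
        mul_pos (mul_pos two_pos hmpos) hsum
      _ ≤ _ := le_trans (hmid z) (hbound z)
  · exact fun z => le_trans (hmid z) (hbound z)
end
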